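/- Multiset invariants of W_1 and W_2: let m ≥ 2 and let δ=(δ_i)_{1≤i≤m−1} be a profile, with W_1(δ) = {m} ∪ {i : δ_i=−1} ∪ {m−i : δ_i=1} and W_2(δ) = {i+j : i<j, δ_i=δ_j=−1} ∪ {2m−i−j : i<j, δ_i=δ_j=1} ∪ {2m+i−j : i<j, δ_i<δ_j} ∪ {j−i : i<j, δ_i>δ_j} (indices ranging over 1≤i<j≤m−1). Then: (i) #W_1(δ) = m and #W_2(δ) = binom(m−1,2); (ii) Σ_{t∈W_1(δ)} 1/m + Σ_{t∈W_2(δ)} 1/(2m) = (m²+m+2)/(4m); (iii) Σ_{t∈W_1(δ)} t/m + Σ_{t∈W_2(δ)} t/(2m) = (m²−m+4)/4; and hence (iv) Σ_{t∈W_1(δ)} (t/(2m) − 1/4) + Σ_{t∈W_2(δ)} (t/(4m) − 1/4) = 1/4. In particular, these quantities are independent of the profile δ. -/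
import Mathlib


open scoped BigOperators

/-- `δ` is a `±1`-profile on the indices `1, …, h` -/
def IsProfile (h : ℕ) (δ : ℕ → ℤ) : Prop := ∀ i, 1 ≤ i → i ≤ h → δ i = 1 ∨ δ i = -1

/-- the multiset `W_1(δ) = {m} ∪ {i : δ_i = -1} ∪ {m - i : δ_i = 1}` -/
def W1 (m : ℕ) (δ : ℕ → ℤ) : Multiset ℕ :=
  m ::ₘ (Finset.Icc 1 (m - 1)).val.map (fun i => if δ i = -1 then i else m - i)

/-- the multiset
`W_2(δ) = {i+j : i<j, δ_i=δ_j=-1} ∪ {2m-i-j : i<j, δ_i=δ_j=1}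
          ∪ {2m+i-j : i<j, δ_i<δ_j} ∪ {j-i : i<j, δ_i>δ_j}`,
where `1 ≤ i < j ≤ m-1` -/
def W2 (m : ℕ) (δ : ℕ → ℤ) : Multiset ℕ :=
  ((((Finset.Icc 1 (m - 1)) ×ˢ (Finset.Icc 1 (m - 1))).filter
      (fun q => q.1 < q.2)).val).map
    (fun q =>
      if δ q.1 = -1 ∧ δ q.2 = -1 then q.1 + q.2
      else if δ q.1 = 1 ∧ δ q.2 = 1 then 2 * m - q.1 - q.2
      else if δ q.1 < δ q.2 then 2 * m + q.1 - q.2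
      else q.2 - q.1)

private lemma sum_nsub (n : ℕ) : ∑ i ∈ Finset.Icc 1 n, (n - i) = n.choose 2 := by
  induction n with
  | zero => simp
  | succ n ih =>
    have hins : Finset.Icc 1 (n + 1) = insert (n + 1) (Finset.Icc 1 n) := by
      ext x; simp [Finset.mem_Icc, Finset.mem_insert]; omega
    rw [hins, Finset.sum_insert (by simp)]
    have h2 : ∑ i ∈ Finset.Icc 1 n, (n + 1 - i) = (∑ i ∈ Finset.Icc 1 n, (n - i)) + n := by
      rw [Finset.sum_congr rfl (fun i hi => show n + 1 - i = (n - i) + 1 by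
        have := Finset.mem_Icc.mp hi; omega), Finset.sum_add_distrib, Finset.sum_const,
        Nat.card_Icc]
      simp
    rw [h2, ih]
    have key : (n + 1).choose 2 = n + n.choose 2 := by
      have := Nat.choose_succ_succ n 1
      simpa using this
    omega

private lemma filt1 (n i : ℕ) (hi : 1 ≤ i) :
    (Finset.Icc 1 n).filter (fun j => i < j) = Finset.Icc (i + 1) n := by
  ext j; simp [Finset.mem_Icc, Finset.mem_filter]; omega

private lemma filt2 (n j : ℕ) (hj : j ≤ n) :
    (Finset.Icc 1 n).filter (fun i => i < j) = Finset.Ico 1 j := by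
  ext i; simp [Finset.mem_Icc, Finset.mem_filter, Finset.mem_Ico]; omega

private lemma map_affine (s : Multiset ℕ) (a b : ℝ) :
    (s.map (fun t : ℕ => a * (t : ℝ) + b)).sum
      = a * (s.map (fun t : ℕ => (t : ℝ))).sum + (Multiset.card s) * b := by
  induction s using Multiset.induction_on with
  | empty => simp
  | cons x s ih =>
    simp only [Multiset.map_cons, Multiset.sum_cons, Multiset.card_cons, ih]
    push_cast; ring

/-- **Multiset invariants of `W_1` and `W_2`** (Section 5): for `m ≥ 2` and a
profile `δ = (δ_1, …, δ_{m-1})`: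
(i) `#W_1(δ) = m` and `#W_2(δ) = C(m-1, 2)`;
(ii) `Σ_{t ∈ W_1} 1/m + Σ_{t ∈ W_2} 1/(2m) = (m²+m+2)/(4m)`;
(iii) `Σ_{t ∈ W_1} t/m + Σ_{t ∈ W_2} t/(2m) = (m²-m+4)/4`;
(iv) `Σ_{t ∈ W_1} (t/(2m) - 1/4) + Σ_{t ∈ W_2} (t/(4m) - 1/4) = 1/4`.
In particular these quantities do not depend on the profile `δ`. -/
theorem W1_W2_invariants (m : ℕ) (hm : 2 ≤ m) (δ : ℕ → ℤ)
    (hδ : IsProfile (m - 1) δ) :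
    Multiset.card (W1 m δ) = m ∧
    Multiset.card (W2 m δ) = (m - 1).choose 2 ∧
    ((W1 m δ).map (fun _ => 1 / (m : ℝ))).sum +
        ((W2 m δ).map (fun _ => 1 / (2 * (m : ℝ)))).sum
      = ((m : ℝ) ^ 2 + m + 2) / (4 * m) ∧
    ((W1 m δ).map (fun t => (t : ℝ) / m)).sum +
        ((W2 m δ).map (fun t => (t : ℝ) / (2 * m))).sum
      = ((m : ℝ) ^ 2 - m + 4) / 4 ∧
    ((W1 m δ).map (fun t => (t : ℝ) / (2 * m) - 1 / 4)).sum +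
        ((W2 m δ).map (fun t => (t : ℝ) / (4 * m) - 1 / 4)).sum
      = 1 / 4 := by
  have hm0 : (m : ℝ) ≠ 0 := by positivity
  -- cardinalities
  have hcW1 : Multiset.card (W1 m δ) = m := by
    rw [W1]
    simp [Nat.card_Icc]
    omega
  have hcardP : (((Finset.Icc 1 (m - 1) ×ˢ Finset.Icc 1 (m - 1)).filter
      (fun q : ℕ × ℕ => q.1 < q.2)).card) = (m - 1).choose 2 := by
    have key : ∀ i ∈ Finset.Icc 1 (m - 1),
        (∑ j ∈ Finset.Icc 1 (m - 1), if i < j then (1:ℕ) else 0) = m - 1 - i := by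
      intro i hi
      rw [← Finset.card_filter, filt1 _ _ (Finset.mem_Icc.mp hi).1, Nat.card_Icc]
      omega
    rw [Finset.card_filter, Finset.sum_product, Finset.sum_congr rfl key, sum_nsub]
  have hcW2 : Multiset.card (W2 m δ) = (m - 1).choose 2 := by
    rw [W2, Multiset.card_map]
    exact hcardP
  -- pointwise evaluation of W1 elements
  have hT1 : ((W1 m δ).map (fun t : ℕ => (t : ℝ))).sum
      = m + (((m : ℝ) - 1) * m / 2
          + ∑ i ∈ Finset.Icc 1 (m - 1), (δ i : ℝ) * ((m : ℝ) / 2 - i)) := by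
    rw [show W1 m δ = m ::ₘ (Finset.Icc 1 (m - 1)).val.map (fun i => if δ i = -1 then i else m - i) from rfl, Multiset.map_cons, Multiset.sum_cons, Multiset.map_map]
    congr 1
    rw [← Finset.sum_eq_multiset_sum]
    calc ∑ i ∈ Finset.Icc 1 (m - 1),
          (((fun t : ℕ => (t : ℝ)) ∘ fun i => if δ i = -1 then i else m - i) i)
        = ∑ i ∈ Finset.Icc 1 (m - 1), ((m : ℝ) / 2 + (δ i : ℝ) * ((m : ℝ) / 2 - i)) := by
          refine Finset.sum_congr rfl fun i hi => ?_
          obtain ⟨h1, h2⟩ := Finset.mem_Icc.mp hi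
          simp only [Function.comp_apply]
          rcases hδ i h1 h2 with h | h
          · rw [if_neg (by rw [h]; decide), Nat.cast_sub (by omega : i ≤ m), h]
            push_cast; ring
          · rw [if_pos h, h]
            push_cast; ring
      _ = _ := by
          rw [Finset.sum_add_distrib, Finset.sum_const, Nat.card_Icc, nsmul_eq_mul]
          have : ((m - 1 + 1 - 1 : ℕ) : ℝ) = (m : ℝ) - 1 := by
            rw [show m - 1 + 1 - 1 = m - 1 by omega, Nat.cast_sub (by omega)]; norm_num
          rw [this]; ring
  -- pointwise evaluation of W2 elements
  have hT2 : ((W2 m δ).map (fun t : ℕ => (t : ℝ))).sum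
      = ((m - 1).choose 2 : ℕ) * (m : ℝ)
          - 2 * ∑ i ∈ Finset.Icc 1 (m - 1), (δ i : ℝ) * ((m : ℝ) / 2 - i) := by
    rw [W2, Multiset.map_map, ← Finset.sum_eq_multiset_sum]
    have hmem : ∀ q : ℕ × ℕ, q ∈ (Finset.Icc 1 (m - 1) ×ˢ Finset.Icc 1 (m - 1)).filter
        (fun q : ℕ × ℕ => q.1 < q.2) → 1 ≤ q.1 ∧ q.1 < q.2 ∧ q.2 ≤ m - 1 := by
      intro q hq
      obtain ⟨hq1, hq2⟩ := Finset.mem_filter.mp hq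
      obtain ⟨ha, hb⟩ := Finset.mem_product.mp hq1
      exact ⟨(Finset.mem_Icc.mp ha).1, hq2, (Finset.mem_Icc.mp hb).2⟩
    have step1 : ∀ q ∈ (Finset.Icc 1 (m - 1) ×ˢ Finset.Icc 1 (m - 1)).filter
        (fun q : ℕ × ℕ => q.1 < q.2),
        (((fun t : ℕ => (t : ℝ)) ∘ fun q : ℕ × ℕ =>
          if δ q.1 = -1 ∧ δ q.2 = -1 then q.1 + q.2
          else if δ q.1 = 1 ∧ δ q.2 = 1 then 2 * m - q.1 - q.2
          else if δ q.1 < δ q.2 then 2 * m + q.1 - q.2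
          else q.2 - q.1) q)
        = (m : ℝ) - q.1 * (δ q.1 : ℝ) + ((m : ℝ) - q.2) * (δ q.2 : ℝ) := by
      intro q hq
      obtain ⟨h1, hlt, h2⟩ := hmem q hq
      have d1 := hδ q.1 h1 (by omega)
      have d2 := hδ q.2 (by omega) h2
      simp only [Function.comp_apply]
      rcases d1 with e1 | e1 <;> rcases d2 with e2 | e2
      · -- δ₁ = 1, δ₂ = 1
        rw [if_neg (by simp [e1]), if_pos ⟨e1, e2⟩,
            Nat.cast_sub (by omega : q.2 ≤ 2 * m - q.1),
            Nat.cast_sub (by omega : q.1 ≤ 2 * m), e1, e2]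
        push_cast; ring
      · -- δ₁ = 1, δ₂ = -1
        rw [if_neg (by simp [e1]), if_neg (by simp [e2]),
            if_neg (by rw [e1, e2]; decide),
            Nat.cast_sub (by omega : q.1 ≤ q.2), e1, e2]
        push_cast; ring
      · -- δ₁ = -1, δ₂ = 1
        rw [if_neg (by simp [e2]), if_neg (by simp [e1]),
            if_pos (show δ q.1 < δ q.2 by rw [e1, e2]; decide),
            Nat.cast_sub (by omega : q.2 ≤ 2 * m + q.1), e1, e2]
        push_cast; ring
      · -- δ₁ = -1, δ₂ = -1
        rw [if_pos ⟨e1, e2⟩, e1, e2]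
        push_cast; ring
    rw [Finset.sum_congr rfl step1]
    have split : ∑ q ∈ (Finset.Icc 1 (m - 1) ×ˢ Finset.Icc 1 (m - 1)).filter
          (fun q : ℕ × ℕ => q.1 < q.2),
          ((m : ℝ) - q.1 * (δ q.1 : ℝ) + ((m : ℝ) - q.2) * (δ q.2 : ℝ))
        = (∑ q ∈ (Finset.Icc 1 (m - 1) ×ˢ Finset.Icc 1 (m - 1)).filter
            (fun q : ℕ × ℕ => q.1 < q.2), ((m : ℝ) - q.1 * (δ q.1 : ℝ)))
          + ∑ q ∈ (Finset.Icc 1 (m - 1) ×ˢ Finset.Icc 1 (m - 1)).filter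
            (fun q : ℕ × ℕ => q.1 < q.2), (((m : ℝ) - q.2) * (δ q.2 : ℝ)) :=
      Finset.sum_add_distrib
    rw [split]
    have hA : ∑ q ∈ (Finset.Icc 1 (m - 1) ×ˢ Finset.Icc 1 (m - 1)).filter
          (fun q : ℕ × ℕ => q.1 < q.2), ((m : ℝ) - q.1 * (δ q.1 : ℝ))
        = ∑ i ∈ Finset.Icc 1 (m - 1),
            ((m - 1 - i : ℕ) : ℝ) * ((m : ℝ) - i * (δ i : ℝ)) := by
      rw [Finset.sum_filter, Finset.sum_product]
      refine Finset.sum_congr rfl fun i hi => ?_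
      show ∑ j ∈ Finset.Icc 1 (m - 1),
          (if i < j then (m : ℝ) - i * (δ i : ℝ) else 0) = _
      rw [← Finset.sum_filter, Finset.sum_const, filt1 _ _ (Finset.mem_Icc.mp hi).1,
          Nat.card_Icc, nsmul_eq_mul, show m - 1 + 1 - (i + 1) = m - 1 - i by omega]
    have hB : ∑ q ∈ (Finset.Icc 1 (m - 1) ×ˢ Finset.Icc 1 (m - 1)).filter
          (fun q : ℕ × ℕ => q.1 < q.2), (((m : ℝ) - q.2) * (δ q.2 : ℝ))
        = ∑ j ∈ Finset.Icc 1 (m - 1),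
            ((j - 1 : ℕ) : ℝ) * (((m : ℝ) - j) * (δ j : ℝ)) := by
      rw [Finset.sum_filter, Finset.sum_product_right]
      refine Finset.sum_congr rfl fun j hj => ?_
      show ∑ i ∈ Finset.Icc 1 (m - 1),
          (if i < j then ((m : ℝ) - j) * (δ j : ℝ) else 0) = _
      rw [← Finset.sum_filter, Finset.sum_const, filt2 _ _ (Finset.mem_Icc.mp hj).2,
          Nat.card_Ico, nsmul_eq_mul]
    rw [hA, hB, ← Finset.sum_add_distrib]
    have final : ∀ i ∈ Finset.Icc 1 (m - 1),
        ((m - 1 - i : ℕ) : ℝ) * ((m : ℝ) - i * (δ i : ℝ))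
          + ((i - 1 : ℕ) : ℝ) * (((m : ℝ) - i) * (δ i : ℝ))
        = ((m - 1 - i : ℕ) : ℝ) * (m : ℝ) + (-2) * ((δ i : ℝ) * ((m : ℝ) / 2 - i)) := by
      intro i hi
      obtain ⟨h1, h2⟩ := Finset.mem_Icc.mp hi
      rw [Nat.cast_sub (by omega : i ≤ m - 1), Nat.cast_sub (by omega : 1 ≤ i),
          Nat.cast_sub (by omega : 1 ≤ m)]
      push_cast; ring
    rw [Finset.sum_congr rfl final, Finset.sum_add_distrib, ← Finset.sum_mul,
        ← Finset.mul_sum, ← Nat.cast_sum, sum_nsub]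
    ring
  -- casting the binomial coefficient
  have hchoose : (((m - 1).choose 2 : ℕ) : ℝ) = ((m : ℝ) - 1) * ((m : ℝ) - 2) / 2 := by
    rw [Nat.cast_choose_two, Nat.cast_sub (by omega : 1 ≤ m)]
    push_cast; ring
  have hcoe1 : ((W1 m δ : Multiset ℝ)) = (W1 m δ).map (fun t : ℕ => (t : ℝ)) := by
    show Multiset.bind _ (fun a => {((a : ℕ) : ℝ)}) = _
    exact Multiset.bind_singleton _ _
  have hcoe2 : ((W2 m δ : Multiset ℝ)) = (W2 m δ).map (fun t : ℕ => (t : ℝ)) := by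
    show Multiset.bind _ (fun a => {((a : ℕ) : ℝ)}) = _
    exact Multiset.bind_singleton _ _
  refine ⟨hcW1, hcW2, ?_, ?_, ?_⟩
  · rw [show (fun _ : ℕ => 1 / (m : ℝ)) = (fun t : ℕ => 0 * (t : ℝ) + 1 / (m : ℝ)) from
        funext fun t => by ring,
      show (fun _ : ℕ => 1 / (2 * (m : ℝ))) = (fun t : ℕ => 0 * (t : ℝ) + 1 / (2 * (m : ℝ))) from
        funext fun t => by ring,
      map_affine, map_affine, hcW1, hcW2, hchoose]
    field_simp
    ring
  · rw [hcoe1, hcoe2, Multiset.map_map, Multiset.map_map,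
      show ((fun t : ℝ => t / (m : ℝ)) ∘ fun t : ℕ => (t : ℝ))
          = (fun t : ℕ => 1 / (m : ℝ) * (t : ℝ) + 0) from
        funext fun t => by simp [Function.comp]; ring,
      show ((fun t : ℝ => t / (2 * (m : ℝ))) ∘ fun t : ℕ => (t : ℝ))
          = (fun t : ℕ => 1 / (2 * (m : ℝ)) * (t : ℝ) + 0) from
        funext fun t => by simp [Function.comp]; ring,
      map_affine, map_affine, hT1, hT2, hcW1, hcW2, hchoose]
    field_simp
    ring
  · rw [hcoe1, hcoe2, Multiset.map_map, Multiset.map_map,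
      show ((fun t : ℝ => t / (2 * (m : ℝ)) - 1 / 4) ∘ fun t : ℕ => (t : ℝ))
          = (fun t : ℕ => 1 / (2 * (m : ℝ)) * (t : ℝ) + (-(1 / 4))) from
        funext fun t => by simp [Function.comp]; ring,
      show ((fun t : ℝ => t / (4 * (m : ℝ)) - 1 / 4) ∘ fun t : ℕ => (t : ℝ))
          = (fun t : ℕ => 1 / (4 * (m : ℝ)) * (t : ℝ) + (-(1 / 4))) from
        funext fun t => by simp [Function.comp]; ring,
      map_affine, map_affine, hT1, hT2, hcW1, hcW2, hchoose]
    field_simp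
    ring
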